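/- Every pure Nash equilibrium network of the adversarial network creation game with α < ∞ is 2-edge-connected (as a multigraph), since any bridge would give some agent infinite expected distance cost that it could avoid. -/

import Mathlib

open scoped BigOperators ENNReal

/-- A walk of length `n` between two vertices under step relation `r`. -/
def walkLen {V : Type*} (r : V → V → Prop) : ℕ → V → V → Prop
  | 0, u, v => u = v
  | (n+1), u, v => ∃ w, r u w ∧ walkLen r n w v

/-- Adjacency in a multigraph given by a multiset of (undirected) edges. -/
def mAdj {V : Type*} (m : Multiset (Sym2 V)) (u v : V) : Prop := s(u, v) ∈ m

/-- Hop-count distance (possibly infinite) in a multigraph. -/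
noncomputable def medist {V : Type*} (m : Multiset (Sym2 V)) (u v : V) : ℕ∞ :=
  sInf ((fun n : ℕ => (n : ℕ∞)) '' {n | walkLen (mAdj m) n u v})

/-- Expected distance cost (in `ℝ≥0∞`) of vertex `u` in a multigraph under uniform random
deletion of one edge (if there are no edges, the plain distance cost). -/
noncomputable def evCost {V : Type*} [DecidableEq V] [Fintype V]
    (m : Multiset (Sym2 V)) (u : V) : ℝ≥0∞ :=
  if Multiset.card m = 0 then ∑ v : V, ((medist m u v : ℕ∞) : ℝ≥0∞)
  else (Multiset.card m : ℝ≥0∞)⁻¹ *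
    (m.map (fun e => ∑ v : V, ((medist (m.erase e) u v : ℕ∞) : ℝ≥0∞))).sum

/-- The multigraph built from a strategy profile of the network creation game. -/
def edgeMS {n : ℕ} (s : Fin n → Multiset (Fin n)) : Multiset (Sym2 (Fin n)) :=
  ∑ u : Fin n, (s u).map (fun v => s(u, v))

/-- Cost of agent `u`: `α` per owned edge plus expected distance cost. -/
noncomputable def agentCost {n : ℕ} (α : ℝ≥0∞) (s : Fin n → Multiset (Fin n)) (u : Fin n) :
    ℝ≥0∞ :=
  α * (Multiset.card (s u) : ℝ≥0∞) + evCost (edgeMS s) u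

/-- Pure Nash equilibrium: no agent can strictly decrease its cost by a unilateral change
of the multiset of edges it owns (an agent may not buy edges to itself). -/
def IsNE {n : ℕ} (α : ℝ≥0∞) (s : Fin n → Multiset (Fin n)) : Prop :=
  ∀ u : Fin n, ∀ t : Multiset (Fin n), u ∉ t →
    agentCost α s u ≤ agentCost α (Function.update s u t) u

/-- Connectivity of a multigraph given by a multiset of edges. -/
def mConnected {V : Type*} (m : Multiset (Sym2 V)) : Prop :=
  ∀ u v : V, ∃ k : ℕ, walkLen (mAdj m) k u v

lemma walkLen_mono {V : Type*} {r r' : V → V → Prop} (h : ∀ a b, r a b → r' a b) :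
    ∀ k u v, walkLen r k u v → walkLen r' k u v
  | 0, _, _, hw => hw
  | (k+1), _, v, ⟨w, hr, hw⟩ => ⟨w, h _ _ hr, walkLen_mono h k w v hw⟩

lemma medist_le {V : Type*} {m : Multiset (Sym2 V)} {u v : V} {k : ℕ}
    (h : walkLen (mAdj m) k u v) : medist m u v ≤ (k : ℕ∞) :=
  sInf_le ⟨k, h, rfl⟩

lemma medist_ne_top_iff {V : Type*} {m : Multiset (Sym2 V)} {u v : V} :
    medist m u v ≠ ⊤ ↔ ∃ k, walkLen (mAdj m) k u v := by
  constructor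
  · intro h
    by_contra hk
    push_neg at hk
    have : ((fun n : ℕ => (n : ℕ∞)) '' {n | walkLen (mAdj m) n u v}) = ∅ := by
      ext x; simp only [Set.mem_image, Set.mem_setOf_eq, Set.mem_empty_iff_false, iff_false]
      rintro ⟨k, hw, -⟩; exact hk k hw
    exact h (by rw [medist, this, sInf_empty])
  · rintro ⟨k, hk⟩
    exact ne_top_of_le_ne_top (by simp : (k : ℕ∞) ≠ ⊤) (medist_le hk)

lemma ms_sum_ne_top {m : Multiset ℝ≥0∞} (h : ∀ x ∈ m, x ≠ ⊤) : m.sum ≠ ⊤ := by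
  induction m using Multiset.induction with
  | empty => simp
  | cons a t ih =>
    rw [Multiset.sum_cons]
    exact ENNReal.add_ne_top.2 ⟨h a (Multiset.mem_cons_self a t),
      ih fun x hx => h x (Multiset.mem_cons_of_mem hx)⟩

lemma ms_sum_eq_top {m : Multiset ℝ≥0∞} {x : ℝ≥0∞} (hx : x ∈ m) (hxt : x = ⊤) :
    m.sum = ⊤ := by
  rw [← Multiset.cons_erase hx, Multiset.sum_cons, hxt, top_add]

lemma enat_coe_ne_top {x : ℕ∞} : ((x : ℕ∞) : ℝ≥0∞) ≠ ⊤ ↔ x ≠ ⊤ := by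
  constructor
  · intro h; rintro rfl; exact h ENat.toENNReal_top
  · intro h; rw [← ENat.toENNReal_top]
    exact fun hc => h (ENat.toENNReal_strictMono.injective hc)

lemma evCost_ne_top_of_NE {n : ℕ} (hn : 3 ≤ n) (α : ℝ≥0∞) (hα : α ≠ ⊤)
    (s : Fin n → Multiset (Fin n)) (hNE : IsNE α s) (u : Fin n) :
    evCost (edgeMS s) u ≠ ⊤ := by
  classical
  set d : Multiset (Fin n) := (Finset.univ.erase u).val with hd
  set t := d + d with ht
  have hud : u ∉ d := by
    rw [hd]
    exact fun h => Finset.notMem_erase u _ (Finset.mem_def.2 h)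
  have hut : u ∉ t := by
    rw [ht]
    intro h
    rcases Multiset.mem_add.1 h with h | h <;> exact hud h
  set s' := Function.update s u t with hs'
  set m' := edgeMS s' with hm'
  have hcount : ∀ v : Fin n, v ≠ u → 2 ≤ Multiset.count s(u, v) m' := by
    intro v hv
    have hvd : v ∈ d := by
      rw [hd]
      exact Finset.mem_def.1 (Finset.mem_erase.2 ⟨hv, Finset.mem_univ v⟩)
    have h1 : 1 ≤ Multiset.count s(u, v) (d.map (fun x => s(u, x))) :=
      Multiset.one_le_count_iff_mem.2 (Multiset.mem_map_of_mem _ hvd)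
    have h2 : 2 ≤ Multiset.count s(u, v) (t.map (fun x => s(u, x))) := by
      rw [ht, Multiset.map_add, Multiset.count_add]; omega
    calc 2 ≤ Multiset.count s(u, v) ((s' u).map (fun x => s(u, x))) := by
          rw [hs', Function.update_self]; exact h2
      _ ≤ Multiset.count s(u, v) m' := by
          rw [hm', edgeMS, Multiset.count_sum']
          exact Finset.single_le_sum
            (f := fun w => Multiset.count s(u, v) ((s' w).map (fun x => s(w, x))))
            (fun i _ => Nat.zero_le _) (Finset.mem_univ u)
  have hadjE : ∀ (e : Sym2 (Fin n)) (v : Fin n), v ≠ u → mAdj (m'.erase e) u v := by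
    intro e v hv
    have h2 := hcount v hv
    have h1 : 1 ≤ Multiset.count s(u, v) (m'.erase e) := by
      rcases eq_or_ne (s(u, v)) e with rfl | hne
      · rw [Multiset.count_erase_self]; omega
      · rw [Multiset.count_erase_of_ne hne]; omega
    exact Multiset.one_le_count_iff_mem.1 h1
  have hdist : ∀ (e : Sym2 (Fin n)) (v : Fin n), medist (m'.erase e) u v ≠ ⊤ := by
    intro e v
    rcases eq_or_ne v u with rfl | hv
    · exact medist_ne_top_iff.2 ⟨0, rfl⟩
    · exact medist_ne_top_iff.2 ⟨1, v, hadjE e v hv, rfl⟩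
  obtain ⟨v0, hv0⟩ := Fintype.exists_ne_of_one_lt_card (by simp; omega) u
  have hv0m : s(u, v0) ∈ m' := by
    have := hcount v0 hv0
    exact Multiset.one_le_count_iff_mem.1 (by omega)
  have hcard : Multiset.card m' ≠ 0 := by
    intro hc
    rw [Multiset.card_eq_zero] at hc
    rw [hc] at hv0m
    simp at hv0m
  have hev : evCost m' u ≠ ⊤ := by
    rw [evCost, if_neg hcard]
    refine ENNReal.mul_ne_top (ENNReal.inv_ne_top.2 ?_) (ms_sum_ne_top ?_)
    · exact_mod_cast hcard
    · intro x hx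
      obtain ⟨e, he, rfl⟩ := Multiset.mem_map.1 hx
      exact ENNReal.sum_ne_top.2 fun v _ => enat_coe_ne_top.2 (hdist e v)
  have hdev : agentCost α s' u ≠ ⊤ := by
    rw [agentCost, ← hm']
    exact ENNReal.add_ne_top.2 ⟨ENNReal.mul_ne_top hα (ENNReal.natCast_ne_top _), hev⟩
  have hle := hNE u t hut
  rw [← hs'] at hle
  have hfin : agentCost α s u ≠ ⊤ := by
    intro hc
    rw [hc] at hle
    exact hdev (top_le_iff.1 hle)
  rw [agentCost] at hfin
  exact (ENNReal.add_ne_top.1 hfin).2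

/-- Every pure Nash equilibrium network of the adversarial network creation game with
finite edge price `α` (and `n ≥ 3` agents) is 2-edge-connected: it is connected and
remains connected after removal of any single edge. -/
theorem NE_twoEdgeConnected {n : ℕ} (hn : 3 ≤ n) (α : ℝ≥0∞) (hα : α ≠ ⊤)
    (s : Fin n → Multiset (Fin n)) (hown : ∀ u : Fin n, u ∉ s u) (hNE : IsNE α s) :
    mConnected (edgeMS s) ∧ ∀ e ∈ edgeMS s, mConnected ((edgeMS s).erase e) := by
  classical
  have hev : ∀ u : Fin n, evCost (edgeMS s) u ≠ ⊤ :=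
    fun u => evCost_ne_top_of_NE hn α hα s hNE u
  set m := edgeMS s with hm
  have hne : Nonempty (Fin n) := ⟨⟨0, by omega⟩⟩
  obtain ⟨u0⟩ := hne
  have hcard : Multiset.card m ≠ 0 := by
    intro hc
    obtain ⟨v, hv⟩ := Fintype.exists_ne_of_one_lt_card (by simp; omega) u0
    have h := hev u0
    rw [evCost, if_pos hc] at h
    apply h
    refine ENNReal.sum_eq_top.2 ⟨v, Finset.mem_univ v, ?_⟩
    have hm0 : m = 0 := Multiset.card_eq_zero.1 hc
    have hdt : medist m u0 v = ⊤ := by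
      by_contra hcc
      obtain ⟨k, hk⟩ := medist_ne_top_iff.1 hcc
      cases k with
      | zero => exact hv hk.symm
      | succ k =>
        obtain ⟨w, hadj, -⟩ := hk
        rw [mAdj, hm0] at hadj
        simp at hadj
    rw [hdt, ENat.toENNReal_top]
  have hbridge : ∀ e ∈ m, mConnected (m.erase e) := by
    intro e he u v
    have h := hev u
    rw [evCost, if_neg hcard] at h
    have hinv0 : (Multiset.card m : ℝ≥0∞)⁻¹ ≠ 0 :=
      ENNReal.inv_ne_zero.2 (ENNReal.natCast_ne_top _)
    have hsum : (m.map fun e => ∑ v : Fin n, ((medist (m.erase e) u v : ℕ∞) : ℝ≥0∞)).sum ≠ ⊤ := by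
      intro hc
      rw [hc, ENNReal.mul_top hinv0] at h
      exact h rfl
    have hterm : (∑ v : Fin n, ((medist (m.erase e) u v : ℕ∞) : ℝ≥0∞)) ≠ ⊤ := by
      intro hc
      exact hsum (ms_sum_eq_top (Multiset.mem_map_of_mem _ he) hc)
    have hv := ENNReal.sum_ne_top.1 hterm v (Finset.mem_univ v)
    exact medist_ne_top_iff.1 (enat_coe_ne_top.1 hv)
  refine ⟨?_, hbridge⟩
  intro u v
  have hm0 : m ≠ 0 := by
    intro h0
    rw [h0] at hcard
    exact hcard rfl
  obtain ⟨e, he⟩ := Multiset.exists_mem_of_ne_zero hm0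
  obtain ⟨k, hk⟩ := hbridge e he u v
  exact ⟨k, walkLen_mono (fun a b hab => Multiset.mem_of_mem_erase hab) k u v hk⟩
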